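/- Fix an integer j ≥ 0. For all integers r, s with r > j and s > j, the coefficient of q^j in P_r equals the coefficient of q^j in P_s; that is, the j-th Betti number of the moduli space of two-pointed, genus-zero, degree-two stable maps to ℙ^r stabilizes for r > j (to the limiting value (5/2)j² + (3/2)j + 1). -/

import Mathlib

open Polynomial Finset

/-- The q-integer `[n] = 1 + q + ... + q^(n-1)` in `ℤ[q]`. -/
noncomputable def qint (n : ℕ) : Polynomial ℤ := ∑ i ∈ Finset.range n, X ^ i

/-- The Poincaré polynomial `P_r` of the moduli space of two-pointed, genus-zero,
degree-two stable maps to `ℙ^r`. -/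
noncomputable def P (r : ℕ) : Polynomial ℤ :=
  (∑ i ∈ Finset.range (r + 1), (X : Polynomial ℤ) ^ i) *
    (∑ i ∈ Finset.range r, (X : Polynomial ℤ) ^ i) *
    ((∑ i ∈ Finset.range (r + 3), (X : Polynomial ℤ) ^ i) +
      2 * ∑ i ∈ Finset.Icc 1 (r + 1), (X : Polynomial ℤ) ^ i +
      2 * ∑ i ∈ Finset.Icc 2 r, (X : Polynomial ℤ) ^ i)

/-- Limiting coefficient sequence of the third factor. -/
def cc (k : ℕ) : ℤ := 1 + (if 1 ≤ k then 2 else 0) + (if 2 ≤ k then 2 else 0)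

/-- The stable value of the `j`-th coefficient. -/
def S (j : ℕ) : ℤ := ∑ k ∈ Finset.range (j + 1), cc k * ((j - k : ℕ) + 1 : ℤ)

lemma coeff_rangesum (n k : ℕ) :
    (∑ i ∈ Finset.range n, (X : Polynomial ℤ) ^ i).coeff k = if k < n then 1 else 0 := by
  simp [Polynomial.finset_sum_coeff, Polynomial.coeff_X_pow, Finset.sum_ite_eq]

lemma coeff_Iccsum (a b k : ℕ) :
    (∑ i ∈ Finset.Icc a b, (X : Polynomial ℤ) ^ i).coeff k =
      if a ≤ k ∧ k ≤ b then 1 else 0 := by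
  simp [Polynomial.finset_sum_coeff, Polynomial.coeff_X_pow, Finset.sum_ite_eq,
    Finset.mem_Icc]

lemma coeff_AB (r m : ℕ) (h : m < r) :
    (((∑ i ∈ Finset.range (r + 1), (X : Polynomial ℤ) ^ i) *
      (∑ i ∈ Finset.range r, (X : Polynomial ℤ) ^ i)).coeff m) = (m : ℤ) + 1 := by
  rw [Polynomial.coeff_mul]
  have : ∀ p ∈ Finset.HasAntidiagonal.antidiagonal m,
      (∑ i ∈ Finset.range (r + 1), (X : Polynomial ℤ) ^ i).coeff p.1 *
        (∑ i ∈ Finset.range r, (X : Polynomial ℤ) ^ i).coeff p.2 = 1 := by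
    intro p hp
    rw [Finset.HasAntidiagonal.mem_antidiagonal] at hp
    rw [coeff_rangesum, coeff_rangesum, if_pos, if_pos]
    · ring
    · omega
    · omega
  rw [Finset.sum_congr rfl this, Finset.sum_const, Finset.Nat.card_antidiagonal]
  ring

lemma coeff_C (r k : ℕ) (h : k < r) :
    (((∑ i ∈ Finset.range (r + 3), (X : Polynomial ℤ) ^ i) +
      2 * ∑ i ∈ Finset.Icc 1 (r + 1), (X : Polynomial ℤ) ^ i +
      2 * ∑ i ∈ Finset.Icc 2 r, (X : Polynomial ℤ) ^ i).coeff k) = cc k := by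
  rw [Polynomial.coeff_add, Polynomial.coeff_add, Polynomial.coeff_ofNat_mul,
    Polynomial.coeff_ofNat_mul, coeff_rangesum, coeff_Iccsum, coeff_Iccsum]
  unfold cc
  rw [if_pos (by omega)]
  rcases Nat.lt_or_ge k 1 with h1 | h1
  · rw [if_neg (by omega), if_neg (by omega), if_neg (by omega), if_neg (by omega)]; ring
  · rcases Nat.lt_or_ge k 2 with h2 | h2
    · rw [if_pos (by omega), if_neg (by omega), if_pos (by omega), if_neg (by omega)]; ring
    · rw [if_pos (by omega), if_pos (by omega), if_pos (by omega), if_pos (by omega)]; ring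

lemma coeff_P (j r : ℕ) (h : j < r) : (P r).coeff j = S j := by
  rw [P, mul_comm, Polynomial.coeff_mul, Finset.Nat.sum_antidiagonal_eq_sum_range_succ_mk]
  unfold S
  refine Finset.sum_congr rfl fun k hk => ?_
  rw [Finset.mem_range] at hk
  rw [coeff_C r k (by omega), coeff_AB r (j - k) (by omega)]

lemma sum_cc (m : ℕ) (h : 1 ≤ m) : ∑ k ∈ Finset.range (m + 1), cc k = 5 * m - 1 := by
  induction m with
  | zero => omega
  | succ n ih =>
    rcases Nat.eq_zero_or_pos n with rfl | hn
    · decide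
    · rw [Finset.sum_range_succ, ih hn]
      have : cc (n + 1) = 5 := by
        unfold cc; rw [if_pos (by omega), if_pos (by omega)]; norm_num
      rw [this]; push_cast; ring

lemma two_S (j : ℕ) : 2 * S j = 5 * (j : ℤ) ^ 2 + 3 * (j : ℤ) + 2 := by
  induction j with
  | zero => decide
  | succ n ih =>
    have hS : S (n + 1) = S n + ∑ k ∈ Finset.range (n + 2), cc k := by
      unfold S
      rw [Finset.sum_range_succ]
      have h1 : ∀ k ∈ Finset.range (n + 1),
          cc k * ((n + 1 - k : ℕ) + 1 : ℤ) = cc k * ((n - k : ℕ) + 1 : ℤ) + cc k := by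
        intro k hk
        rw [Finset.mem_range] at hk
        have : (n + 1 - k : ℕ) = (n - k) + 1 := by omega
        rw [this]; push_cast; ring
      rw [Finset.sum_congr rfl h1, Finset.sum_add_distrib, Finset.sum_range_succ]
      have : cc (n + 1) * ((n + 1 - (n + 1) : ℕ) + 1 : ℤ) = cc (n + 1) := by
        simp
      rw [this, Finset.sum_range_succ cc (n + 1)]; ring
    have hsum : ∑ k ∈ Finset.range (n + 2), cc k = 5 * (n + 1 : ℤ) - 1 := by
      have := sum_cc (n + 1) (by omega)
      push_cast at this ⊢
      linarith [this]
    rw [hS, mul_add, ih, hsum]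
    push_cast
    ring

/-- For fixed `j`, the `j`-th Betti number of `\overline{M}_{0,2}(ℙ^r, 2)` stabilizes
for `r > j`, to the limiting value `(5/2)j² + (3/2)j + 1`. -/
theorem betti_stabilize (j : ℕ) :
    ∀ r s : ℕ, j < r → j < s →
      (P r).coeff j = (P s).coeff j ∧
      2 * (P r).coeff j = 5 * (j : ℤ) ^ 2 + 3 * (j : ℤ) + 2 := by
  intro r s hr hs
  rw [coeff_P j r hr, coeff_P j s hs]
  exact ⟨rfl, two_S j⟩
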